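/- For every real number M > 0, every τ ∈ (0,1], and every x ∈ ℝ with (1-τ)² - x² < 1, one has 1/r(τ,x)² ≤ exp(r(τ,x)/(2M))/(8M²·τ); in particular the sup norm of 1/r² on the slice Σ_τ is bounded by C/τ, a bound which fails to be integrable in τ on [0,T] for any T > 0. -/

import Mathlib

/-- The Kruskal relation function `f_M(ρ) = (1 - ρ/(2M))·exp(ρ/(2M))`. -/
noncomputable def fM (M ρ : ℝ) : ℝ := (1 - ρ / (2 * M)) * Real.exp (ρ / (2 * M))

/-- The radius function in the `(τ,x)` coordinates: `r(τ,x) = r_M((1-τ)² - x²)`. -/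
noncomputable def rr (rM : ℝ → ℝ) (τ x : ℝ) : ℝ := rM ((1 - τ) ^ 2 - x ^ 2)

/-- Key elementary inequality: `2 ≤ e^u (u² - 2u + 2)` for `u ≥ 0`. -/
lemma key_exp_ineq (u : ℝ) (hu : 0 ≤ u) : 2 ≤ Real.exp u * (u ^ 2 - 2 * u + 2) := by
  have h := Real.quadratic_le_exp_of_nonneg hu
  nlinarith [sq_nonneg u, sq_nonneg (u - 1), sq_nonneg (u ^ 2)]

/-- For every `M > 0`, every `τ ∈ (0,1]`, and every `x` with `(1-τ)² - x² < 1`, one has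
`1/r(τ,x)² ≤ exp(r(τ,x)/(2M))/(8M²·τ)`; in particular the sup norm of `1/r²` on the slice
`Σ_τ` is bounded by `C/τ`, a bound which fails to be integrable in `τ` on `[0,T]`. -/
theorem inverse_radius_squared_slice_bound (M : ℝ) (hM : 0 < M) (rM : ℝ → ℝ)
    (hrM : ∀ s : ℝ, s < 1 → 0 < rM s ∧ fM M (rM s) = s)
    (τ x : ℝ) (hτ0 : 0 < τ) (hτ1 : τ ≤ 1) (h : (1 - τ) ^ 2 - x ^ 2 < 1) :
    1 / (rr rM τ x) ^ 2 ≤ Real.exp (rr rM τ x / (2 * M)) / (8 * M ^ 2 * τ) := by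
  obtain ⟨hr, hf⟩ := hrM _ h
  set r : ℝ := rM ((1 - τ) ^ 2 - x ^ 2) with hrdef
  have hrr : rr rM τ x = r := rfl
  rw [hrr]
  set u : ℝ := r / (2 * M) with hudef
  have hu : 0 ≤ u := div_nonneg hr.le (by linarith)
  have hru : r = 2 * M * u := by rw [hudef]; field_simp [hM.ne']
  have hfM : (1 - u) * Real.exp u = (1 - τ) ^ 2 - x ^ 2 := hf
  have hkey := key_exp_ineq u hu
  -- τ ≤ 1 - s
  have hτs : τ ≤ 1 - ((1 - τ) ^ 2 - x ^ 2) := by nlinarith [sq_nonneg x]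
  -- 2τ ≤ u² e^u
  have h2 : 2 * τ ≤ u ^ 2 * Real.exp u := by nlinarith
  have hexp : 0 < Real.exp u := Real.exp_pos u
  rw [div_le_div_iff₀ (by positivity) (by positivity)]
  calc 1 * (8 * M ^ 2 * τ) = 4 * M ^ 2 * (2 * τ) := by ring
    _ ≤ 4 * M ^ 2 * (u ^ 2 * Real.exp u) := by nlinarith
    _ = Real.exp u * r ^ 2 := by rw [hru]; ring
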